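/- For every double occurrence word w over a finite type V and every v ∈ V, the interlacement graph of the κ-transform equals the simple local complement of the interlacement graph: I(w∗v) = (I(w))^v. -/

import Mathlib

variable {V : Type*} [Fintype V] [DecidableEq V]

/-- Simple local complement `G^v`: toggle adjacency between distinct neighbors of `v`. -/
def localComp (G : SimpleGraph V) (v : V) : SimpleGraph V where
  Adj u w := u ≠ w ∧ Xor' (G.Adj u w) (G.Adj v u ∧ G.Adj v w)
  symm := by
    constructor
    rintro u w ⟨hne, hx⟩
    refine ⟨hne.symm, ?_⟩
    rw [G.adj_comm w u, and_comm]
    exact hx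
  loopless := by constructor; rintro u ⟨hne, _⟩; exact hne rfl

/-- The interlacement graph of a word `w`: distinct `u` and `x` are adjacent iff their
occurrences alternate in `w`, i.e. the restriction of `w` to `{u, x}` is
`[u, x, u, x]` or `[x, u, x, u]`. -/
def interlacement (w : List V) : SimpleGraph V where
  Adj u x := u ≠ x ∧
    (w.filter (fun y => decide (y = u ∨ y = x)) = [u, x, u, x] ∨
     w.filter (fun y => decide (y = u ∨ y = x)) = [x, u, x, u])
  symm := by
    constructor
    rintro u x ⟨hne, h⟩
    refine ⟨hne.symm, ?_⟩
    have hp : (fun y => decide (y = x ∨ y = u)) = (fun y => decide (y = u ∨ y = x)) := by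
      funext y; exact decide_eq_decide.mpr or_comm
    rw [hp]
    exact h.symm
  loopless := by constructor; rintro u ⟨hne, _⟩; exact hne rfl

section AuxLemmas

set_option linter.unusedSectionVars false

set_option maxRecDepth 10000 in
lemma boolCore : ∀ (b1 b2 b3 b4 : Bool) (i j : Fin 5), (i : ℕ) ≤ (j : ℕ) →
    (List.count true [b1,b2,b3,b4] = 2) → (List.count false [b1,b2,b3,b4] = 2) →
    ((([b1,b2,b3,b4].take i) ++ (([b1,b2,b3,b4].take j).drop i).reverse ++ ([b1,b2,b3,b4].drop j) = [true,false,true,false] ∨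
      ([b1,b2,b3,b4].take i) ++ (([b1,b2,b3,b4].take j).drop i).reverse ++ ([b1,b2,b3,b4].drop j) = [false,true,false,true]) ↔
     Xor' ([b1,b2,b3,b4] = [true,false,true,false] ∨ [b1,b2,b3,b4] = [false,true,false,true])
       ((([b1,b2,b3,b4].take j).drop i).count true = 1 ∧ (([b1,b2,b3,b4].take j).drop i).count false = 1)) := by unfold Xor'; decide

lemma boolCoreN (b1 b2 b3 b4 : Bool) (i j : ℕ) (hij : i ≤ j) (hj : j ≤ 4)
    (h2 : List.count true [b1,b2,b3,b4] = 2) (h3 : List.count false [b1,b2,b3,b4] = 2) :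
    ((([b1,b2,b3,b4].take i) ++ (([b1,b2,b3,b4].take j).drop i).reverse ++ ([b1,b2,b3,b4].drop j) = [true,false,true,false] ∨
      ([b1,b2,b3,b4].take i) ++ (([b1,b2,b3,b4].take j).drop i).reverse ++ ([b1,b2,b3,b4].drop j) = [false,true,false,true]) ↔
     Xor' ([b1,b2,b3,b4] = [true,false,true,false] ∨ [b1,b2,b3,b4] = [false,true,false,true])
       ((([b1,b2,b3,b4].take j).drop i).count true = 1 ∧ (([b1,b2,b3,b4].take j).drop i).count false = 1)) :=
  boolCore b1 b2 b3 b4 ⟨i, by omega⟩ ⟨j, by omega⟩ hij h2 h3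

lemma length_two_elt {u x : V} (hne : u ≠ x) :
    ∀ l : List V, (∀ y ∈ l, y = u ∨ y = x) → l.length = l.count u + l.count x := by
  intro l
  induction l with
  | nil => simp
  | cons z t ih =>
    intro h
    have hz := h z (by simp)
    have ht := ih (fun y hy => h y (by simp [hy]))
    rcases hz with hz | hz <;> subst hz <;>
      simp [List.count_cons, hne, hne.symm, ht] <;> omega

lemma exists_four (l : List Bool) (h : l.length = 4) : ∃ a b c d, l = [a,b,c,d] := by
  match l with
  | [a,b,c,d] => exact ⟨a,b,c,d,rfl⟩
  | [] | [_] | [_,_] | [_,_,_] => simp at h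
  | _::_::_::_::_::t => simp [List.length] at h

lemma core {u x : V} (hne : u ≠ x) (fa fb fc : List V)
    (ha : ∀ y ∈ fa, y = u ∨ y = x) (hb : ∀ y ∈ fb, y = u ∨ y = x) (hc : ∀ y ∈ fc, y = u ∨ y = x)
    (hcu : (fa++fb++fc).count u = 2) (hcx : (fa++fb++fc).count x = 2) :
    ((fa ++ fb.reverse ++ fc = [u,x,u,x] ∨ fa ++ fb.reverse ++ fc = [x,u,x,u]) ↔
     Xor' ((fa++fb++fc = [u,x,u,x] ∨ fa++fb++fc = [x,u,x,u])) (fb.count u = 1 ∧ fb.count x = 1)) := by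
  classical
  set g : V → Bool := fun y => decide (y = u) with hgdef
  set f : Bool → V := fun t => bif t then u else x with hfdef
  have hL : ∀ y ∈ fa ++ fb ++ fc, y = u ∨ y = x := by
    intro y hy; simp only [List.mem_append] at hy
    rcases hy with (hy | hy) | hy
    exacts [ha y hy, hb y hy, hc y hy]
  have hL' : ∀ y ∈ fa ++ fb.reverse ++ fc, y = u ∨ y = x := by
    intro y hy; simp only [List.mem_append, List.mem_reverse] at hy
    rcases hy with (hy | hy) | hy
    exacts [ha y hy, hb y hy, hc y hy]
  have hlen : (fa ++ fb ++ fc).length = 4 := by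
    rw [length_two_elt hne _ hL, hcu, hcx]
  have hct : ∀ l : List V, (l.map g).count true = l.count u := by
    intro l
    rw [List.count_eq_countP, List.count_eq_countP, List.countP_map]
    apply List.countP_congr; intro z _; simp [hgdef]
  have hcf : ∀ l : List V, (∀ y ∈ l, y = u ∨ y = x) → (l.map g).count false = l.count x := by
    intro l hl
    rw [List.count_eq_countP, List.count_eq_countP, List.countP_map]
    apply List.countP_congr; intro z hz
    rcases hl z hz with h | h <;> subst h <;> simp [hgdef, hne, hne.symm]
  have hmapfg : ∀ l : List V, (∀ y ∈ l, y = u ∨ y = x) → (l.map g).map f = l := by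
    intro l hl
    rw [List.map_map]
    refine (List.map_congr_left ?_).trans (List.map_id l)
    intro z hz; rcases hl z hz with h | h <;> subst h <;> simp [hfdef, hgdef, hne.symm]
  have heq : ∀ l l' : List V, (∀ y ∈ l, y = u ∨ y = x) → (∀ y ∈ l', y = u ∨ y = x) →
      (l = l' ↔ l.map g = l'.map g) := by
    intro l l' hl hl'
    constructor
    · intro h; rw [h]
    · intro h; rw [← hmapfg l hl, ← hmapfg l' hl', h]
  obtain ⟨b1, b2, b3, b4, hs⟩ := exists_four ((fa ++ fb ++ fc).map g) (by simpa using hlen)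
  have hla4 : fa.length + fb.length ≤ 4 := by
    simp only [List.length_append] at hlen; omega
  have BC := boolCoreN b1 b2 b3 b4 fa.length (fa.length + fb.length)
    (Nat.le_add_right _ _) hla4
    (by rw [← hs, hct]; exact hcu) (by rw [← hs, hcf _ hL]; exact hcx)
  have h1 : [b1,b2,b3,b4].take fa.length = fa.map g := by
    rw [← hs, List.append_assoc, List.map_append,
      show fa.length = (fa.map g).length from (List.length_map _).symm, List.take_left]
  have h2 : [b1,b2,b3,b4].take (fa.length + fb.length) = fa.map g ++ fb.map g := by
    rw [← hs, List.map_append, List.map_append,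
      show fa.length + fb.length = (fa.map g ++ fb.map g).length by
        simp [List.length_append], List.take_left]
  have h3 : [b1,b2,b3,b4].drop (fa.length + fb.length) = fc.map g := by
    rw [← hs, List.map_append, List.map_append,
      show fa.length + fb.length = (fa.map g ++ fb.map g).length by
        simp [List.length_append]]
    exact List.drop_left
  have h4 : ([b1,b2,b3,b4].take (fa.length + fb.length)).drop fa.length = fb.map g := by
    rw [h2, show fa.length = (fa.map g).length from (List.length_map _).symm, List.drop_left]
  rw [h1, h3, h4] at BC
  rw [heq _ _ hL' (by intro y; simp; tauto), heq _ _ hL' (by intro y; simp; tauto),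
    heq _ _ hL (by intro y; simp; tauto), heq _ _ hL (by intro y; simp; tauto)]
  rw [show List.map g [u,x,u,x] = [true,false,true,false] by simp [hgdef, hne.symm],
    show List.map g [x,u,x,u] = [false,true,false,true] by simp [hgdef, hne.symm]]
  rw [← hct fb, ← hcf fb hb]
  rw [show (fa ++ fb.reverse ++ fc).map g = fa.map g ++ (fb.map g).reverse ++ fc.map g by
        simp [List.map_append, List.map_reverse],
      show (fa ++ fb ++ fc).map g = [b1,b2,b3,b4] from hs]
  exact BC

lemma interlacement_adj (w : List V) (u x : V) :
    (interlacement w).Adj u x ↔ (u ≠ x ∧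
      (w.filter (fun y => decide (y = u ∨ y = x)) = [u, x, u, x] ∨
       w.filter (fun y => decide (y = u ∨ y = x)) = [x, u, x, u])) := Iff.rfl

lemma localComp_adj (G : SimpleGraph V) (v u x : V) :
    (localComp G v).Adj u x ↔ (u ≠ x ∧ Xor' (G.Adj u x) (G.Adj v u ∧ G.Adj v x)) := Iff.rfl

lemma filter_pair_replicate {v y : V} :
    ∀ l : List V, l.count v = 0 →
      l.filter (fun z => decide (z = v ∨ z = y)) = List.replicate (l.count y) y := by
  intro l
  induction l with
  | nil => simp
  | cons z t ih =>
    intro h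
    have hzv : z ≠ v := fun e => by simp [e, List.count_cons] at h
    have ht : t.count v = 0 := by rw [List.count_cons] at h; omega
    rw [List.count_cons, List.filter_cons]
    by_cases hy : z = y
    · rw [if_pos (by simp [hy])]
      rw [show (List.count y t + if z == y then 1 else 0) = List.count y t + 1 by simp [hy]]
      rw [List.replicate_succ, hy, ih ht]
    · rw [if_neg (by simp [hzv, hy])]
      rw [show (List.count y t + if z == y then 1 else 0) = List.count y t by simp [hy]]
      exact ih ht

lemma adj_v_iff {v y : V} (a b c : List V) (hvy : v ≠ y)
    (hw : ∀ u : V, (a ++ [v] ++ b ++ [v] ++ c).count u = 2) :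
    (interlacement (a ++ [v] ++ b ++ [v] ++ c)).Adj v y ↔ b.count y = 1 := by
  have hby : (v == y) = false := by simp [hvy]
  have hv := hw v
  simp only [List.count_append, List.count_cons, List.count_nil, beq_self_eq_true,
    if_true, hby, if_false] at hv
  have hva : a.count v = 0 := by omega
  have hvb : b.count v = 0 := by omega
  have hvc : c.count v = 0 := by omega
  have hy := hw y
  simp only [List.count_append, List.count_cons, List.count_nil, beq_self_eq_true,
    if_true, hby, if_false] at hy
  rw [interlacement_adj]
  simp only [List.filter_append]
  rw [filter_pair_replicate a hva, filter_pair_replicate b hvb, filter_pair_replicate c hvc]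
  rw [show List.filter (fun z => decide (z = v ∨ z = y)) [v] = [v] by simp]
  have h1 : a.count y ≤ 2 := by omega
  have h2 : b.count y ≤ 2 := by omega
  have h3 : c.count y ≤ 2 := by omega
  constructor
  · rintro ⟨-, h | h⟩ <;>
    · interval_cases hh1 : a.count y <;> interval_cases hh2 : b.count y <;>
        interval_cases hh3 : c.count y <;>
        simp_all [List.replicate_succ, hvy, hvy.symm]
  · intro hb1
    refine ⟨hvy, ?_⟩
    rw [hb1] at hy ⊢
    interval_cases hh1 : a.count y <;> interval_cases hh3 : c.count y <;>
      simp_all [List.replicate_succ, hvy, hvy.symm]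

end AuxLemmas

/-- for a double occurrence word `w = a v b v c` over `V` and a vertex `v`,
the interlacement graph of the κ-transform `w∗v = a v b' v c` (where `b'` reverses `b`)
is the simple local complement at `v` of the interlacement graph of `w`. -/
theorem interlacement_kappa_transform (w : List V) (v : V) (a b c : List V)
    (hw : ∀ u : V, w.count u = 2)
    (hdec : w = a ++ [v] ++ b ++ [v] ++ c) :
    interlacement (a ++ [v] ++ b.reverse ++ [v] ++ c) = localComp (interlacement w) v := by
  subst hdec
  have hv := hw v
  simp only [List.count_append, List.count_cons, List.count_nil, beq_self_eq_true,
    if_true] at hv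
  have hva : a.count v = 0 := by omega
  have hvb : b.count v = 0 := by omega
  have hvc : c.count v = 0 := by omega
  ext u x
  rw [interlacement_adj, localComp_adj]
  by_cases hux : u = x
  · simp [hux]
  · by_cases hvu : v = u
    · subst hvu
      have hAvv : ¬ (interlacement (a ++ [v] ++ b ++ [v] ++ c)).Adj v v :=
        SimpleGraph.irrefl _
      have hfilter : (a ++ [v] ++ b.reverse ++ [v] ++ c).filter
            (fun y => decide (y = v ∨ y = x)) =
          (a ++ [v] ++ b ++ [v] ++ c).filter (fun y => decide (y = v ∨ y = x)) := by
        simp only [List.filter_append, List.filter_reverse]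
        rw [filter_pair_replicate b hvb, List.reverse_replicate]
      rw [hfilter, eq_false hAvv]
      rw [interlacement_adj (a ++ [v] ++ b ++ [v] ++ c) v x]
      simp only [false_and, Xor', Xor]
      tauto
    · by_cases hvx : v = x
      · subst hvx
        have hAvv : ¬ (interlacement (a ++ [v] ++ b ++ [v] ++ c)).Adj v v :=
          SimpleGraph.irrefl _
        have hpred : (fun y => decide (y = u ∨ y = v)) = (fun y => decide (y = v ∨ y = u)) :=
          funext fun z => decide_eq_decide.mpr or_comm
        have hfilter : (a ++ [v] ++ b.reverse ++ [v] ++ c).filter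
              (fun y => decide (y = u ∨ y = v)) =
            (a ++ [v] ++ b ++ [v] ++ c).filter (fun y => decide (y = u ∨ y = v)) := by
          rw [hpred]
          simp only [List.filter_append, List.filter_reverse]
          rw [filter_pair_replicate b hvb, List.reverse_replicate]
        rw [hfilter, eq_false hAvv]
        rw [interlacement_adj (a ++ [v] ++ b ++ [v] ++ c) u v]
        simp only [and_false, Xor', Xor]
        tauto
      · -- main case : v ∉ {u, x}
        rw [adj_v_iff a b c hvu hw, adj_v_iff a b c hvx hw,
          interlacement_adj (a ++ [v] ++ b ++ [v] ++ c) u x]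
        set p : V → Bool := fun y => decide (y = u ∨ y = x) with hpdef
        have hpu : p u = true := by simp [hpdef]
        have hpx : p x = true := by simp [hpdef]
        have hfW : (a ++ [v] ++ b ++ [v] ++ c).filter p =
            a.filter p ++ b.filter p ++ c.filter p := by
          simp [List.filter_append, hpdef, hvu, hvx]
        have hfW' : (a ++ [v] ++ b.reverse ++ [v] ++ c).filter p =
            a.filter p ++ (b.filter p).reverse ++ c.filter p := by
          simp [List.filter_append, List.filter_reverse, hpdef, hvu, hvx]
        rw [hfW, hfW']
        refine and_congr_right fun hne => ?_
        rw [show (u ≠ x ∧ (a.filter p ++ b.filter p ++ c.filter p = [u,x,u,x] ∨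
              a.filter p ++ b.filter p ++ c.filter p = [x,u,x,u])) ↔
            (a.filter p ++ b.filter p ++ c.filter p = [u,x,u,x] ∨
              a.filter p ++ b.filter p ++ c.filter p = [x,u,x,u]) from and_iff_right hne]
        rw [show b.count u = (b.filter p).count u from (List.count_filter hpu).symm,
          show b.count x = (b.filter p).count x from (List.count_filter hpx).symm]
        have hmem : ∀ l : List V, ∀ y ∈ l.filter p, y = u ∨ y = x := by
          intro l y hy
          have := (List.mem_filter.mp hy).2
          simpa [hpdef] using this
        have hcu : (a.filter p ++ b.filter p ++ c.filter p).count u = 2 := by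
          rw [← hfW, List.count_filter hpu]; exact hw u
        have hcx : (a.filter p ++ b.filter p ++ c.filter p).count x = 2 := by
          rw [← hfW, List.count_filter hpx]; exact hw x
        exact core hne (a.filter p) (b.filter p) (c.filter p)
          (hmem a) (hmem b) (hmem c) hcu hcx
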